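/- Let V be a finite set, G a simple graph on V with closed neighborhoods N_v, and Π a partition of V with maximum disagreement φ(Π) = max_{v} |[v]_Π △ N_v|. If u, v ∈ V satisfy |N_u ∩ N_v| > 2·φ(Π), then u and v lie in the same block of Π. -/
import Mathlib


open scoped symmDiff

open Finset

variable {V : Type*} [Fintype V] [DecidableEq V]

/-- Closed neighborhood of `v`: `v` together with its adjacent vertices. -/
def nbhd (G : SimpleGraph V) [DecidableRel G.Adj] (v : V) : Finset V :=
  insert v (G.neighborFinset v)

/-- `P` encodes a partition of `V`, where `P v` is the block containing `v`. -/
def IsPartitionFun (P : V → Finset V) : Prop :=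
  (∀ v, v ∈ P v) ∧ ∀ u v : V, u ∈ P v → P u = P v

/-- Maximum disagreement of the partition `P`. -/
def phi (G : SimpleGraph V) [DecidableRel G.Adj] (P : V → Finset V) : ℕ :=
  Finset.univ.sup fun v => ((P v) ∆ (nbhd G v)).card

theorem statement1 (G : SimpleGraph V) [DecidableRel G.Adj]
    (P : V → Finset V) (hP : IsPartitionFun P) (u v : V)
    (h : 2 * phi G P < (nbhd G u ∩ nbhd G v).card) :
    P u = P v := by
  by_contra hne
  -- blocks are disjoint
  have hdisj : ∀ w, w ∈ P u → w ∈ P v → False := by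
    intro w hwu hwv
    exact hne ((hP.2 w u hwu).symm.trans (hP.2 w v hwv))
  have hsub : nbhd G u ∩ nbhd G v ⊆ (nbhd G u \ P u) ∪ (nbhd G v \ P v) := by
    intro w hw
    simp only [mem_inter] at hw
    simp only [mem_union, mem_sdiff]
    by_cases h1 : w ∈ P u
    · exact Or.inr ⟨hw.2, fun h2 => hdisj w h1 h2⟩
    · exact Or.inl ⟨hw.1, h1⟩
  have hphi : ∀ x, (nbhd G x \ P x).card ≤ phi G P := by
    intro x
    calc (nbhd G x \ P x).card ≤ ((P x) ∆ (nbhd G x)).card := by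
          apply card_le_card
          intro w hw
          simp only [mem_sdiff] at hw
          simp [symmDiff_def, hw.1, hw.2]
      _ ≤ phi G P := Finset.le_sup (f := fun v => ((P v) ∆ (nbhd G v)).card) (mem_univ x)
  have := card_le_card hsub
  have h2 := card_union_le (nbhd G u \ P u) (nbhd G v \ P v)
  have hu := hphi u
  have hv := hphi v
  omega
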